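/- The modified Bessel function I_ν(z) = (z/2)^ν ∑_{i=0}^∞ (z²/4)^i / (Γ(i+1)Γ(ν+i+1)) satisfies the derivative identity x·(d/dx)[x^{v/2} e^{-cx} I_v(2√x)] = (v - c·x)·x^{v/2} e^{-cx} I_v(2√x) + x^{(v+1)/2} e^{-cx} I_{v+1}(2√x) for all x > 0, c > 0, and v > -1. -/

import Mathlib

noncomputable def besselI (ν z : ℝ) : ℝ :=
  (z / 2) ^ ν * ∑' i : ℕ, (z ^ 2 / 4) ^ i / (Real.Gamma (i + 1) * Real.Gamma (ν + i + 1))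

/-- The weight `w_{v,c}(x) = x^{v/2} e^{-c x} I_v(2√x)`. -/
noncomputable def wBessel (v c x : ℝ) : ℝ :=
  x ^ (v / 2) * Real.exp (-c * x) * besselI v (2 * Real.sqrt x)

noncomputable def fB (v x : ℝ) : ℝ :=
  ∑' i : ℕ, x ^ i / (Real.Gamma (i + 1) * Real.Gamma (v + i + 1))

lemma D_pos (v : ℝ) (hv : -1 < v) (i : ℕ) :
    0 < Real.Gamma (i + 1) * Real.Gamma (v + i + 1) := by
  apply mul_pos
  · exact Real.Gamma_pos_of_pos (by positivity)
  · exact Real.Gamma_pos_of_pos (by nlinarith [Nat.cast_nonneg (α := ℝ) i])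

lemma summable_fB (v : ℝ) (hv : -1 < v) (R : ℝ) :
    Summable fun i : ℕ => R ^ i / (Real.Gamma (i + 1) * Real.Gamma (v + i + 1)) := by
  apply summable_of_ratio_norm_eventually_le (r := 1/2) (by norm_num)
  filter_upwards [Filter.eventually_ge_atTop ⌈2 * |R|⌉₊,
    Filter.eventually_ge_atTop ⌈-v⌉₊] with n hn1 hn2
  have h1 : (2 : ℝ) * |R| ≤ n := (Nat.ceil_le.mp hn1)
  have h2 : -v ≤ n := (Nat.ceil_le.mp hn2)
  have hD := D_pos v hv n
  have hG1 : (0:ℝ) < Real.Gamma (n + 1) := Real.Gamma_pos_of_pos (by positivity)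
  have hG2 : (0:ℝ) < Real.Gamma (v + n + 1) :=
    Real.Gamma_pos_of_pos (by nlinarith [Nat.cast_nonneg (α := ℝ) n])
  have e1 : Real.Gamma ((n + 1 : ℕ) + 1) = ((n : ℝ) + 1) * Real.Gamma (n + 1) := by
    push_cast
    rw [show (n : ℝ) + 1 + 1 = ((n:ℝ) + 1) + 1 by ring, Real.Gamma_add_one (by positivity)]
  have e2 : Real.Gamma (v + (n + 1 : ℕ) + 1) = (v + n + 1) * Real.Gamma (v + n + 1) := by
    push_cast
    rw [show v + ((n : ℝ) + 1) + 1 = (v + n + 1) + 1 by ring,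
      Real.Gamma_add_one (by nlinarith [Nat.cast_nonneg (α := ℝ) n])]
  rw [Real.norm_eq_abs, Real.norm_eq_abs, e1, e2, abs_div, abs_div, abs_of_pos hD]
  have hvn : (0:ℝ) < v + n + 1 := by nlinarith [Nat.cast_nonneg (α := ℝ) n]
  have habs : |((n : ℝ) + 1) * Real.Gamma (n + 1) * ((v + n + 1) * Real.Gamma (v + n + 1))|
      = ((n : ℝ) + 1) * (v + n + 1) * (Real.Gamma (n + 1) * Real.Gamma (v + n + 1)) := by
    rw [abs_of_pos (by positivity)]; ring
  rw [habs, pow_succ, abs_mul, ← mul_div_assoc,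
    div_le_div_iff₀ (by positivity) (by positivity)]
  calc |R ^ n| * |R| * (Real.Gamma (n + 1) * Real.Gamma (v + n + 1))
      = |R| ^ n * (Real.Gamma (n + 1) * Real.Gamma (v + n + 1)) * |R| := by
        rw [abs_pow]; ring
    _ ≤ |R| ^ n * (Real.Gamma (n + 1) * Real.Gamma (v + n + 1)) *
        (((n : ℝ) + 1) * (v + n + 1) / 2) := by
        apply mul_le_mul_of_nonneg_left (by nlinarith [abs_nonneg R]) (by positivity)
    _ = 1 / 2 * |R ^ n| * (((n : ℝ) + 1) * (v + n + 1) *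
        (Real.Gamma (n + 1) * Real.Gamma (v + n + 1))) := by rw [abs_pow]; ring

lemma summable_u (v : ℝ) (hv : -1 < v) (R : ℝ) (hR : 0 ≤ R) :
    Summable fun i : ℕ => (i : ℝ) * R ^ (i - 1) / (Real.Gamma (i + 1) * Real.Gamma (v + i + 1)) := by
  set M := max 1 R with hM
  have hM1 : (1:ℝ) ≤ M := le_max_left _ _
  refine Summable.of_nonneg_of_le
    (fun i => div_nonneg (by positivity) (D_pos v hv i).le) (fun i => ?_)
    (summable_fB v hv (2 * M))
  gcongr
  · exact (D_pos v hv i).le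
  · have h1 : (i : ℝ) ≤ 2 ^ i := by exact_mod_cast (Nat.lt_two_pow_self (n := i)).le
    have h2 : R ^ (i - 1) ≤ M ^ i :=
      (pow_le_pow_left₀ hR (le_max_right _ _) _).trans
        (pow_le_pow_right₀ hM1 (Nat.sub_le i 1))
    calc (i : ℝ) * R ^ (i - 1) ≤ 2 ^ i * M ^ i :=
          mul_le_mul h1 h2 (by positivity) (by positivity)
      _ = (2 * M) ^ i := (mul_pow 2 M i).symm

lemma hasDerivAt_fB (v : ℝ) (hv : -1 < v) (x : ℝ) :
    HasDerivAt (fun y => fB v y) (fB (v + 1) x) x := by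
  set D : ℕ → ℝ := fun i => Real.Gamma (i + 1) * Real.Gamma (v + i + 1) with hD
  set R : ℝ := |x| + 1 with hR
  have hR0 : 0 ≤ R := by positivity
  have hmem : x ∈ Metric.ball (0:ℝ) R := by
    simp [Real.dist_eq, hR]
  have key : HasDerivAt (fun y => fB v y)
      (∑' i : ℕ, (i : ℝ) * x ^ (i - 1) / D i) x := by
    apply hasDerivAt_tsum_of_isPreconnected (summable_u v hv R hR0)
      Metric.isOpen_ball (convex_ball (0:ℝ) R).isPreconnected
      (g := fun i y => y ^ i / D i) (g' := fun i y => (i : ℝ) * y ^ (i - 1) / D i)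
      (fun i y _ => (hasDerivAt_pow i y).div_const (D i)) _ hmem
      (summable_fB v hv x) hmem
    intro i y hy
    have hyR : |y| ≤ R := by
      have := mem_ball_iff_norm.mp hy
      simp only [sub_zero, Real.norm_eq_abs] at this
      linarith
    have hDp := D_pos v hv i
    rw [Real.norm_eq_abs, abs_div, abs_of_pos hDp, abs_mul, abs_pow,
      abs_of_nonneg (Nat.cast_nonneg (α := ℝ) i)]
    gcongr
  convert key using 1
  have hs : Summable fun i : ℕ => (i : ℝ) * x ^ (i - 1) / D i := by
    apply Summable.of_norm
    refine Summable.of_nonneg_of_le (fun i => norm_nonneg _) (fun i => ?_)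
      (summable_u v hv R hR0)
    have hDp := D_pos v hv i
    rw [Real.norm_eq_abs, abs_div, abs_of_pos hDp, abs_mul, abs_pow,
      abs_of_nonneg (Nat.cast_nonneg (α := ℝ) i)]
    gcongr
    rw [hR]; linarith [abs_nonneg x]
  rw [fB, hs.tsum_eq_zero_add]
  simp only [Nat.cast_zero, zero_mul, zero_div, zero_add]
  apply tsum_congr
  intro i
  have e1 : Real.Gamma ((i + 1 : ℕ) + 1) = ((i : ℝ) + 1) * Real.Gamma (i + 1) := by
    push_cast
    rw [show (i : ℝ) + 1 + 1 = ((i:ℝ) + 1) + 1 by ring, Real.Gamma_add_one (by positivity)]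
  have e2 : Real.Gamma (v + (i + 1 : ℕ) + 1) = Real.Gamma (v + 1 + i + 1) := by
    push_cast; ring_nf
  have hG1 : (0:ℝ) < Real.Gamma (i + 1) := Real.Gamma_pos_of_pos (by positivity)
  have hG2 : (0:ℝ) < Real.Gamma (v + 1 + i + 1) :=
    Real.Gamma_pos_of_pos (by nlinarith [Nat.cast_nonneg (α := ℝ) i])
  simp only [hD, e1, e2, Nat.add_sub_cancel]
  push_cast
  field_simp

lemma besselI_sqrt (v y : ℝ) (hy : 0 < y) :
    besselI v (2 * Real.sqrt y) = y ^ (v / 2) * fB v y := by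
  have h1 : (2 * Real.sqrt y) ^ 2 / 4 = y := by
    rw [mul_pow, Real.sq_sqrt hy.le]; ring
  have h2 : 2 * Real.sqrt y / 2 = Real.sqrt y := by ring
  rw [besselI, h1, h2, Real.sqrt_eq_rpow, ← Real.rpow_mul hy.le,
    show 1 / (2:ℝ) * v = v / 2 by ring, fB]

theorem bessel_weight_deriv (v c x : ℝ) (hx : 0 < x) (hc : 0 < c) (hv : -1 < v) :
    x * deriv (fun y => wBessel v c y) x =
      (v - c * x) * wBessel v c x +
        x ^ ((v + 1) / 2) * Real.exp (-c * x) * besselI (v + 1) (2 * Real.sqrt x) := by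
  have wB_eq : ∀ y : ℝ, 0 < y → wBessel v c y = y ^ v * Real.exp (-c * y) * fB v y := by
    intro y hy
    have h : y ^ (v/2) * y ^ (v/2) = y ^ v := by
      rw [← Real.rpow_add hy]; congr 1; ring
    rw [wBessel, besselI_sqrt v y hy, ← h]; ring
  have h1 : HasDerivAt (fun y : ℝ => y ^ v) (v * x ^ (v - 1)) x :=
    Real.hasDerivAt_rpow_const (Or.inl hx.ne')
  have h2 : HasDerivAt (fun y : ℝ => Real.exp (-c * y)) (-c * Real.exp (-c * x)) x := by
    have : HasDerivAt (fun y : ℝ => -c * y) (-c) x := by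
      simpa using (hasDerivAt_id x).const_mul (-c)
    simpa [mul_comm] using this.exp
  have h3 : HasDerivAt (fun y => fB v y) (fB (v + 1) x) x := hasDerivAt_fB v hv x
  have H := (h1.mul h2).mul h3
  have heq : (fun y => wBessel v c y) =ᶠ[nhds x] fun y => y ^ v * Real.exp (-c * y) * fB v y := by
    filter_upwards [eventually_gt_nhds hx] with y hy using wB_eq y hy
  rw [Filter.EventuallyEq.deriv_eq heq, show (fun y => y ^ v * Real.exp (-c * y) * fB v y) = ((fun y : ℝ => y ^ v) * fun y => Real.exp (-c * y)) * fun y => fB v y from rfl, H.deriv]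
  rw [wB_eq x hx, besselI_sqrt (v + 1) x hx]
  have hxv : x * x ^ (v - 1) = x ^ v := by
    nth_rewrite 1 [← Real.rpow_one x]
    rw [← Real.rpow_add hx]; congr 1; ring
  have hxv1 : x * x ^ v = x ^ (v + 1) := by
    nth_rewrite 1 [← Real.rpow_one x]
    rw [← Real.rpow_add hx]; congr 1; ring
  have hxh : x ^ ((v+1)/2) * x ^ ((v+1)/2) = x ^ (v + 1) := by
    rw [← Real.rpow_add hx]; congr 1; ring
  calc x * ((v * x ^ (v-1) * Real.exp (-c*x) + x ^ v * (-c * Real.exp (-c*x))) * fB v x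
        + x ^ v * Real.exp (-c*x) * fB (v+1) x)
      = (x * x ^ (v-1)) * (v * Real.exp (-c*x) * fB v x)
        + (x * x ^ v) * (-c * Real.exp (-c*x) * fB v x)
        + (x * x ^ v) * (Real.exp (-c*x) * fB (v+1) x) := by ring
    _ = x ^ v * (v * Real.exp (-c*x) * fB v x)
        + x ^ (v+1) * (-c * Real.exp (-c*x) * fB v x)
        + x ^ (v+1) * (Real.exp (-c*x) * fB (v+1) x) := by rw [hxv, hxv1]
    _ = (v - c * x) * (x ^ v * Real.exp (-c*x) * fB v x)
        + (x ^ ((v+1)/2) * x ^ ((v+1)/2)) * Real.exp (-c*x) * fB (v+1) x := by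
        rw [hxh, ← hxv1]; ring
    _ = (v - c*x) * (x ^ v * Real.exp (-c*x) * fB v x)
        + x ^ ((v+1)/2) * Real.exp (-c*x) * (x ^ ((v+1)/2) * fB (v+1) x) := by ring
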